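/- arXiv:2412.14057 — 7 statements merged into one kernel-verified Lean document; each statement's English description precedes it below -/
import Mathlib

section
/- Let Σ be a signature, M = ⟨V, D, ·_M⟩ a finite-valued deterministic Σ-matrix, and n ∈ ℕ with n ≥ |V|. Then the logic ⟨Σ, ⊢_M⟩ is n-determined: for all Γ ∪ {A} ⊆ L_Σ(P), if Γ ⊬_M A then there exists a substitution σ : P → P_n such that Γ^σ ⊬_M A^σ. -/
structure Signature where
  Conn : Type
  arity : Conn → ℕ

inductive Fm (S : Signature) : Type where
  | var : ℕ → Fm S
  | app : (c : S.Conn) → (Fin (S.arity c) → Fm S) → Fm S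

def Fm.subst {S : Signature} (σ : ℕ → Fm S) : Fm S → Fm S
  | .var i => σ i
  | .app c args => .app c (fun j => (args j).subst σ)

def Fm.varsLT {S : Signature} (n : ℕ) : Fm S → Prop
  | .var i => i < n
  | .app _ args => ∀ j, (args j).varsLT n

structure NMatrix (S : Signature) (V : Type) where
  D : Set V
  interp : (c : S.Conn) → (Fin (S.arity c) → V) → Set V
  interp_nonempty : ∀ c args, (interp c args).Nonempty

def IsVal {S : Signature} {V : Type} (M : NMatrix S V) (v : Fm S → V) : Prop :=
  ∀ (c : S.Conn) (args : Fin (S.arity c) → Fm S),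
    v (Fm.app c args) ∈ M.interp c (fun i => v (args i))

def Entails {S : Signature} {V : Type} (M : NMatrix S V) (Γ : Set (Fm S)) (A : Fm S) : Prop :=
  ∀ v, IsVal M v → (∀ B ∈ Γ, v B ∈ M.D) → v A ∈ M.D

def Interderiv {S : Signature} {V : Type} (M : NMatrix S V) (A B : Fm S) : Prop :=
  Entails M {A} B ∧ Entails M {B} A

def Deterministic {S : Signature} {V : Type} (M : NMatrix S V) : Prop :=
  ∀ c args, ∃ x, M.interp c args = {x}


noncomputable def evalDetM {S : Signature} {V : Type} (M : NMatrix S V)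
    (hdet : Deterministic M) (ρ : ℕ → V) : Fm S → V
  | .var i => ρ i
  | .app c args => (hdet c (fun j => evalDetM M hdet ρ (args j))).choose

lemma evalDet_isVal {S : Signature} {V : Type} (M : NMatrix S V)
    (hdet : Deterministic M) (ρ : ℕ → V) : IsVal M (evalDetM M hdet ρ) := by
  intro c args
  show evalDetM M hdet ρ (.app c args) ∈ _
  rw [(hdet c (fun i => evalDetM M hdet ρ (args i))).choose_spec]
  simp [evalDetM]

lemma isVal_app_eq {S : Signature} {V : Type} {M : NMatrix S V}
    (hdet : Deterministic M) {v : Fm S → V} (hv : IsVal M v)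
    (c : S.Conn) (args : Fin (S.arity c) → Fm S) :
    v (Fm.app c args) = (hdet c (fun j => v (args j))).choose := by
  have h := hv c args
  rw [(hdet c (fun j => v (args j))).choose_spec] at h
  exact h

/-- The logic of a finite-valued deterministic matrix M is n-determined
for any n ≥ |V|: whenever Γ ⊬_M A there is a substitution σ mapping every variable to a
variable among p_0,…,p_{n-1} such that Γ^σ ⊬_M A^σ. -/
theorem stmt_1 {S : Signature} {V : Type} [Finite V] (M : NMatrix S V)
    (hdet : Deterministic M) (n : ℕ) (hn : Nat.card V ≤ n)
    (Γ : Set (Fm S)) (A : Fm S) (h : ¬ Entails M Γ A) :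
    ∃ σ : ℕ → ℕ, (∀ i, σ i < n) ∧
      ¬ Entails M ((fun B => Fm.subst (fun i => Fm.var (σ i)) B) '' Γ)
          (Fm.subst (fun i => Fm.var (σ i)) A) := by
  classical
  simp only [Entails, not_forall] at h
  obtain ⟨v, hv, hΓ, hA⟩ := h
  haveI : Nonempty V := ⟨v (Fm.var 0)⟩
  let e := Finite.equivFin V
  let f : V → ℕ := fun x => ((e x : Fin (Nat.card V)) : ℕ)
  have hfinj : Function.Injective f := by
    intro a b hab
    exact e.injective (Fin.val_injective hab)
  have hflt : ∀ x, f x < n := fun x => lt_of_lt_of_le (e x).isLt hn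
  let σ : ℕ → ℕ := fun i => f (v (Fm.var i))
  refine ⟨σ, fun i => hflt _, ?_⟩
  let ρ : ℕ → V := fun j =>
    if hj : ∃ x : V, f x = j then hj.choose else v (Fm.var 0)
  have hρ : ∀ i, ρ (σ i) = v (Fm.var i) := by
    intro i
    have hj : ∃ x : V, f x = σ i := ⟨v (Fm.var i), rfl⟩
    have := hj.choose_spec
    simp only [ρ, dif_pos hj]
    exact hfinj this
  let w := evalDetM M hdet ρ
  have hw : IsVal M w := evalDet_isVal M hdet ρ
  have key : ∀ C : Fm S, w (Fm.subst (fun i => Fm.var (σ i)) C) = v C := by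
    intro C
    induction C with
    | var i => exact hρ i
    | app c args ih =>
        show w (Fm.app c (fun j => Fm.subst (fun i => Fm.var (σ i)) (args j))) = _
        rw [isVal_app_eq hdet hw, isVal_app_eq hdet hv]
        have : (fun j => w (Fm.subst (fun i => Fm.var (σ i)) (args j))) = fun j => v (args j) := by
          funext jj; exact ih jj
        rw [this]
  intro hent
  apply hA
  have := hent w hw ?_
  · rwa [key A] at this
  · rintro B ⟨C, hC, rfl⟩
    rw [key C]
    exact hΓ C hC
end

section
/- Let Σ be a signature, ⟨Σ, ⊢_1⟩ a compact Tarskian logic, and ⟨Σ, ⊢_2⟩ an n-determined Tarskian logic for some n ∈ ℕ. Suppose Θ ⊆ L_Σ(P_n) is such that for each A ∈ L_Σ(P_n) there exists A* ∈ Θ with A ⊣⊢_1 A* and A ⊣⊢_2 A*. Then ⊢_1 ⊆ ⊢_2 if and only if for all finite Γ ∪ {A} ⊆ Θ, Γ ⊢_1 A implies Γ ⊢_2 A. -/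
def IsTarskian {S : Signature} (r : Set (Fm S) → Fm S → Prop) : Prop :=
  (∀ (Γ : Set (Fm S)) (A : Fm S), A ∈ Γ → r Γ A) ∧
  (∀ (Γ Δ : Set (Fm S)) (A : Fm S), r Γ A → Γ ⊆ Δ → r Δ A) ∧
  (∀ (Γ Δ : Set (Fm S)) (A : Fm S), r Γ A → (∀ B ∈ Γ, r Δ B) → r Δ A) ∧
  (∀ (Γ : Set (Fm S)) (A : Fm S) (σ : ℕ → Fm S), r Γ A →
    r ((fun B => Fm.subst σ B) '' Γ) (Fm.subst σ A))

def Compact {S : Signature} (r : Set (Fm S) → Fm S → Prop) : Prop :=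
  ∀ (Γ : Set (Fm S)) (A : Fm S), r Γ A → ∃ Δ ⊆ Γ, Δ.Finite ∧ r Δ A

def NDetermined {S : Signature} (n : ℕ) (r : Set (Fm S) → Fm S → Prop) : Prop :=
  ∀ (Γ : Set (Fm S)) (A : Fm S), ¬ r Γ A →
    ∃ σ : ℕ → ℕ, (∀ i, σ i < n) ∧
      ¬ r ((fun B => Fm.subst (fun i => Fm.var (σ i)) B) '' Γ)
          (Fm.subst (fun i => Fm.var (σ i)) A)


lemma subst_varsLT {S : Signature} (n : ℕ) (σ : ℕ → ℕ) (hσ : ∀ i, σ i < n) :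
    ∀ A : Fm S, Fm.varsLT n (Fm.subst (fun i => Fm.var (σ i)) A)
  | .var i => hσ i
  | .app c args => fun j => subst_varsLT n σ hσ (args j)

/-- If ⊢₁ is a compact Tarskian logic and ⊢₂ an n-determined Tarskian logic,
and Θ ⊆ L_Σ(P_n) contains, for each formula A over the variables p_0,…,p_{n-1}, a formula A*
interderivable with A in both logics, then ⊢₁ ⊆ ⊢₂ iff Γ ⊢₁ A implies Γ ⊢₂ A for all
finite Γ ∪ {A} ⊆ Θ. -/
theorem stmt_2 {S : Signature} (r1 r2 : Set (Fm S) → Fm S → Prop)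
    (h1 : IsTarskian r1) (h2 : IsTarskian r2)
    (hc : Compact r1) (n : ℕ) (hd : NDetermined n r2)
    (Θ : Set (Fm S)) (hΘ : ∀ B ∈ Θ, Fm.varsLT n B)
    (hrep : ∀ A : Fm S, Fm.varsLT n A →
      ∃ B ∈ Θ, (r1 {A} B ∧ r1 {B} A) ∧ (r2 {A} B ∧ r2 {B} A)) :
    (∀ (Γ : Set (Fm S)) (A : Fm S), r1 Γ A → r2 Γ A) ↔
      (∀ (Γ : Set (Fm S)) (A : Fm S), Γ ⊆ Θ → Γ.Finite → A ∈ Θ → r1 Γ A → r2 Γ A) := by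
    classical
  obtain ⟨refl1, mono1, trans1, subst1⟩ := h1
  obtain ⟨refl2, mono2, trans2, subst2⟩ := h2
  choose star hstarT hp using hrep
  constructor
  · intro h Γ A _ _ _ hΓA; exact h Γ A hΓA
  · intro h Γ A hΓA
    by_contra hnot
    obtain ⟨σ, hσ, hns⟩ := hd Γ A hnot
    set sub := fun B => Fm.subst (fun i => Fm.var (σ i)) B with hsubdef
    have h1s : r1 (sub '' Γ) (sub A) := subst1 Γ A _ hΓA
    obtain ⟨Δ, hΔsub, hΔfin, hΔA⟩ := hc _ _ h1s
    have hv : ∀ B ∈ Δ, Fm.varsLT n B := by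
      intro B hB
      obtain ⟨C, _, rfl⟩ := hΔsub hB
      exact subst_varsLT n σ hσ C
    have hvA : Fm.varsLT n (sub A) := subst_varsLT n σ hσ A
    haveI := hΔfin.to_subtype
    set Δ' : Set (Fm S) := Set.range (fun b : Δ => star b.1 (hv b.1 b.2)) with hD'def
    have hD'T : Δ' ⊆ Θ := by
      rintro C ⟨b, rfl⟩; exact hstarT _ _
    have hD'fin : Δ'.Finite := Set.finite_range _
    have step1 : r1 Δ' (sub A) := by
      refine trans1 Δ Δ' (sub A) hΔA ?_
      intro B hB
      have hx : r1 {star B (hv B hB)} B := (hp B (hv B hB)).1.2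
      refine mono1 _ _ _ hx ?_
      intro x hx2
      rcases hx2 with rfl
      exact ⟨⟨B, hB⟩, rfl⟩
    have step2 : r1 Δ' (star (sub A) hvA) := by
      refine trans1 {sub A} Δ' _ (hp (sub A) hvA).1.1 ?_
      intro B hB; rcases hB with rfl; exact step1
    have step3 : r2 Δ' (star (sub A) hvA) :=
      h Δ' _ hD'T hD'fin (hstarT _ _) step2
    have step4 : r2 Δ (star (sub A) hvA) := by
      refine trans2 Δ' Δ _ step3 ?_
      rintro C ⟨b, rfl⟩
      have hx : r2 {b.1} (star b.1 (hv b.1 b.2)) := (hp b.1 (hv b.1 b.2)).2.1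
      refine mono2 _ _ _ hx ?_
      intro x hx2; rcases hx2 with rfl; exact b.2
    have step5 : r2 Δ (sub A) := by
      refine trans2 {star (sub A) hvA} Δ _ (hp (sub A) hvA).2.2 ?_
      intro B hB; rcases hB with rfl; exact step4
    exact hns (mono2 _ _ _ step5 hΔsub)
end

section
/- Let Σ be a signature, M a Σ-Nmatrix, and M̃ its tilded Nmatrix. For every Γ ∪ {A} ⊆ L_Σ(P): Γ ⊢_{M̃} A if and only if A ∈ Γ or A ∈ Thm(Σ, ⊢_M). -/
/-- The tilde-forgetful function: collapses the fresh designated copy x̃ of each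
undesignated value x back to x. -/
def uForget {S : Signature} {V : Type} (M : NMatrix S V) :
    V ⊕ {x : V // x ∉ M.D} → V :=
  Sum.elim id Subtype.val

/-- The tilded Nmatrix M̃: add a fresh designated copy x̃ of each undesignated value x,
interpreting each connective by ©_{M̃}(x₁,…,x_k) = u⁻¹(©_M(u(x₁),…,u(x_k))). -/
def tilded {S : Signature} {V : Type} (M : NMatrix S V) :
    NMatrix S (V ⊕ {x : V // x ∉ M.D}) where
  D := { y | Sum.elim (fun x => x ∈ M.D) (fun _ => True) y }
  interp := fun c args => uForget M ⁻¹' (M.interp c (fun i => uForget M (args i)))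
  interp_nonempty := by
    intro c args
    obtain ⟨x, hx⟩ := M.interp_nonempty c (fun i => uForget M (args i))
    exact ⟨Sum.inl x, hx⟩

/-- The unconstrained Σ-Nmatrix U_Σ: two values 0 = false, 1 = true, with 1 designated, and
every connective interpreted by the constant multifunction {0, 1}. -/
def unconstrained (S : Signature) : NMatrix S Bool where
  D := {true}
  interp := fun _ _ => Set.univ
  interp_nonempty := fun _ _ => ⟨true, trivial⟩

/-- In the logic of the tilded Nmatrix M̃, Γ ⊢_{M̃} A holds exactly when A ∈ Γ
or A is a theorem of the logic of M. -/
theorem stmt_11 {S : Signature} {V : Type} (M : NMatrix S V)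
    (Γ : Set (Fm S)) (A : Fm S) :
    Entails (tilded M) Γ A ↔ (A ∈ Γ ∨ Entails M ∅ A) := by
  classical
  constructor
  · intro h
    by_contra hc
    push_neg at hc
    obtain ⟨hA, hent⟩ := hc
    rw [Entails] at hent
    push_neg at hent
    obtain ⟨w, hw, -, hwA⟩ := hent
    set v : Fm S → V ⊕ {x : V // x ∉ M.D} := fun B =>
      if B = A then Sum.inl (w B)
      else if hb : w B ∈ M.D then Sum.inl (w B) else Sum.inr ⟨w B, hb⟩ with hv
    have huv : ∀ B, uForget M (v B) = w B := by
      intro B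
      simp only [hv]
      split_ifs <;> rfl
    have hval : IsVal (tilded M) v := by
      intro c args
      show uForget M (v (Fm.app c args)) ∈ M.interp c (fun i => uForget M (v (args i)))
      simp only [huv]
      exact hw c args
    have hd := h v hval ?_
    · simp only [hv, if_pos rfl] at hd
      exact hwA hd
    · intro B hB
      have hBA : B ≠ A := fun e => hA (e ▸ hB)
      simp only [hv, if_neg hBA]
      split_ifs with hb
      · exact hb
      · trivial
  · intro h v hval hΓ
    cases h with
    | inl h => exact hΓ A h
    | inr h =>
      have huval : IsVal M (fun B => uForget M (v B)) := fun c args => hval c args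
      have hd := h _ huval (by simp)
      cases hvA : v A with
      | inl x =>
        rw [hvA] at hd
        simpa [tilded, uForget] using hd
      | inr x =>
        simp [tilded]
end

section
/- Let Σ be a signature and M a Σ-Nmatrix. Then Thm(Σ, ⊢_M) ≠ ∅ if and only if the tilded Nmatrix M̃ and the unconstrained Nmatrix U_Σ are not equivalent (i.e. ⊢_{M̃} ≠ ⊢_{U_Σ}). -/
/-- The logic of M has some theorem if and only if the tilded Nmatrix M̃ and
the unconstrained Nmatrix U_Σ are not equivalent (do not induce the same consequence
relation). -/
theorem stmt_12 {S : Signature} {V : Type} (M : NMatrix S V) :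
    (∃ A : Fm S, Entails M ∅ A) ↔
      ¬ (∀ (Γ : Set (Fm S)) (A : Fm S),
          Entails (tilded M) Γ A ↔ Entails (unconstrained S) Γ A) := by
  classical
  constructor
  · rintro ⟨A, hA⟩ h
    -- tilded M proves A from ∅, but unconstrained does not
    have h1 : Entails (tilded M) ∅ A := by
      intro w hw _
      have hval : IsVal M (fun B => uForget M (w B)) := by
        intro c args
        exact hw c args
      have := hA _ hval (by intro B hB; cases hB)
      cases hwA : w A with
      | inl x =>
        simp only [hwA, uForget, Sum.elim_inl, id] at this
        simpa [tilded, hwA] using this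
      | inr x => simp [tilded, hwA]
    have h2 : ¬ Entails (unconstrained S) ∅ A := by
      intro h2
      have := h2 (fun _ => false) (fun _ _ => trivial) (by intro B hB; cases hB)
      simp [unconstrained] at this
    exact h2 ((h ∅ A).mp h1)
  · intro h
    by_contra hno
    push_neg at hno
    apply h
    intro Γ A
    have hU : Entails (unconstrained S) Γ A ↔ A ∈ Γ := by
      constructor
      · intro hE
        have := hE (fun B => if B ∈ Γ then true else false)
          (fun _ _ => trivial) (by intro B hB; simp [hB, unconstrained])
        simpa [unconstrained] using this
      · intro hA v _ hv
        exact hv A hA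
    rw [hU]
    constructor
    · intro hE
      by_contra hAΓ
      obtain ⟨v, hval, hvA⟩ : ∃ v, IsVal M v ∧ v A ∉ M.D := by
        have := hno A
        unfold Entails at this
        push_neg at this
        obtain ⟨v, hv, _, hvA⟩ := this
        exact ⟨v, hv, hvA⟩
      set w : Fm S → V ⊕ {x : V // x ∉ M.D} := fun B =>
        if hB : B ∈ Γ ∧ v B ∉ M.D then Sum.inr ⟨v B, hB.2⟩ else Sum.inl (v B) with hw
      have huw : ∀ B, uForget M (w B) = v B := by
        intro B
        by_cases hB : B ∈ Γ ∧ v B ∉ M.D <;> simp [hw, hB, uForget]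
      have hwval : IsVal (tilded M) w := by
        intro c args
        show uForget M (w (Fm.app c args)) ∈ M.interp c fun i => uForget M (w (args i))
        simp only [huw]
        exact hval c args
      have hwΓ : ∀ B ∈ Γ, w B ∈ (tilded M).D := by
        intro B hB
        by_cases hD : v B ∈ M.D
        · have : ¬ (B ∈ Γ ∧ v B ∉ M.D) := by tauto
          simp [hw, this, tilded, hD]
        · simp [hw, hB, hD, tilded]
      have := hE w hwval hwΓ
      have hwA : w A = Sum.inl (v A) := by
        have : ¬ (A ∈ Γ ∧ v A ∉ M.D) := by tauto
        simp [hw, this]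
      rw [hwA] at this
      simp only [tilded, Set.mem_setOf_eq, Sum.elim_inl] at this
      exact hvA this
    · intro hA w _ hv
      exact hv A hA
end

section
/- Let Σ be the signature with a single unary connective ♭ and no other connectives, and let M_6 = ⟨{0,1}, {1}, ·_{M_6}⟩ be the Σ-Nmatrix with ♭_{M_6}(0) = {1} and ♭_{M_6}(1) = {0,1}. Then M_6 is equivalent to the unconstrained Nmatrix U_Σ; in particular, the logic of M_6 is discrete: for all Γ ∪ {A} ⊆ L_Σ(P), Γ ⊢_{M_6} A if and only if A ∈ Γ. -/
/-- The signature with a single unary connective ♭ and no other connectives. -/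
def flatSig : Signature where
  Conn := Unit
  arity := fun _ => 1

/-- The Nmatrix M₆ over {0 = false, 1 = true} with 1 designated, ♭(0) = {1} and
♭(1) = {0,1}. -/
def M6 : NMatrix flatSig Bool where
  D := {true}
  interp := fun _ args => if args ⟨0, Nat.one_pos⟩ = false then {true} else Set.univ
  interp_nonempty := by
    intro c args
    try dsimp only
    split
    · exact ⟨true, rfl⟩
    · exact ⟨true, trivial⟩

def fsize : Fm flatSig → ℕ
  | .var _ => 0
  | .app _ args => fsize (args ⟨0, Nat.one_pos⟩) + 1

lemma app_ne_arg (c : flatSig.Conn) (args : Fin (flatSig.arity c) → Fm flatSig)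
    (i : Fin (flatSig.arity c)) : Fm.app c args ≠ args i := by
  have hi : i = ⟨0, Nat.one_pos⟩ := by
    apply Fin.ext
    have h1 : (i : ℕ) < 1 := i.isLt
    show (i : ℕ) = 0
    omega
  subst hi
  intro h
  have := congrArg fsize h
  simp [fsize] at this

lemma entails_of_mem {S : Signature} {V : Type} (M : NMatrix S V) {Γ : Set (Fm S)}
    {A : Fm S} (h : A ∈ Γ) : Entails M Γ A :=
  fun _ _ hΓ => hΓ A h

open Classical in
lemma mem_of_entails_M6 {Γ : Set (Fm flatSig)} {A : Fm flatSig}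
    (h : Entails M6 Γ A) : A ∈ Γ := by
  by_contra hA
  set v : Fm flatSig → Bool := fun B => if B = A then false else true with hv
  have hval : IsVal M6 v := by
    intro c args
    show v (Fm.app c args) ∈ (if v (args ⟨0, Nat.one_pos⟩) = false then {true} else Set.univ)
    by_cases hc : v (args ⟨0, Nat.one_pos⟩) = false
    · rw [if_pos hc]
      have harg : args ⟨0, Nat.one_pos⟩ = A := by
        by_contra hne'
        simp only [hv, if_neg hne'] at hc
        exact Bool.noConfusion hc
      have hne : Fm.app c args ≠ A :=
        fun he => app_ne_arg c args ⟨0, Nat.one_pos⟩ (he.trans harg.symm)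
      show v (Fm.app c args) ∈ ({true} : Set Bool)
      simp [hv, hne]
    · rw [if_neg hc]; trivial
  have hΓ : ∀ B ∈ Γ, v B ∈ M6.D := by
    intro B hB
    have : B ≠ A := fun he => hA (he ▸ hB)
    simp [M6, hv, this]
  have := h v hval hΓ
  simp [M6, hv] at this

/-- M₆ is equivalent to the unconstrained Nmatrix U_Σ; in particular its logic
is discrete: Γ ⊢_{M₆} A iff A ∈ Γ. -/
theorem stmt_15 :
    (∀ (Γ : Set (Fm flatSig)) (A : Fm flatSig),
        Entails M6 Γ A ↔ Entails (unconstrained flatSig) Γ A) ∧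
    (∀ (Γ : Set (Fm flatSig)) (A : Fm flatSig), Entails M6 Γ A ↔ A ∈ Γ) := by
  have key : ∀ (Γ : Set (Fm flatSig)) (A : Fm flatSig), Entails M6 Γ A ↔ A ∈ Γ := by
    intro Γ A
    exact ⟨mem_of_entails_M6, entails_of_mem M6⟩
  refine ⟨fun Γ A => ?_, key⟩
  rw [key]
  constructor
  · intro h
    exact entails_of_mem _ h
  · intro h
    classical
    by_contra hA
    set v : Fm flatSig → Bool := fun B => if B = A then false else true with hv
    have hval : IsVal (unconstrained flatSig) v := fun _ _ => trivial
    have hΓ : ∀ B ∈ Γ, v B ∈ (unconstrained flatSig).D := by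
      intro B hB
      have : B ≠ A := fun he => hA (he ▸ hB)
      simp [unconstrained, hv, this]
    have := h v hval hΓ
    simp [unconstrained, hv] at this
end

section
/- Let M_1 = ⟨V_1, D_1, ·_{M_1}⟩ and M_2 = ⟨V_2, D_2, ·_{M_2}⟩ be Σ-Nmatrices. If there exists a surjective strict homomorphism h : M_1 → M_2 that is strongly-preserving, then ⊢_{M_1} = ⊢_{M_2}. -/
/-- A strict homomorphism of Σ-Nmatrices: a function between the value sets such that the
designated values of M₁ are exactly the preimages of the designated values of M₂, and the
image of each interpretation set is contained in the corresponding interpretation set. -/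
def StrictHom {S : Signature} {V1 V2 : Type} (M1 : NMatrix S V1) (M2 : NMatrix S V2)
    (h : V1 → V2) : Prop :=
  M1.D = h ⁻¹' M2.D ∧
  ∀ (c : S.Conn) (args : Fin (S.arity c) → V1),
    h '' M1.interp c args ⊆ M2.interp c (fun i => h (args i))

/-- A surjective strict homomorphism is strongly-preserving when the image of each
interpretation set is exactly the corresponding interpretation set. -/
def StronglyPreserving {S : Signature} {V1 V2 : Type} (M1 : NMatrix S V1)
    (M2 : NMatrix S V2) (h : V1 → V2) : Prop :=
  ∀ (c : S.Conn) (args : Fin (S.arity c) → V1),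
    h '' M1.interp c args = M2.interp c (fun i => h (args i))

noncomputable def liftVal {S : Signature} {V1 V2 : Type} (M1 : NMatrix S V1)
    (M2 : NMatrix S V2) (h : V1 → V2) (hsurj : Function.Surjective h)
    (hsp : StronglyPreserving M1 M2 h) (v2 : Fm S → V2) (hv2 : IsVal M2 v2) :
    (A : Fm S) → {x : V1 // h x = v2 A}
  | .var i => ⟨(hsurj (v2 (.var i))).choose, (hsurj (v2 (.var i))).choose_spec⟩
  | .app c args =>
    have mem : v2 (.app c args) ∈
        h '' M1.interp c (fun j => (liftVal M1 M2 h hsurj hsp v2 hv2 (args j)).1) := by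
      rw [hsp]
      have heq : (fun j => h (liftVal M1 M2 h hsurj hsp v2 hv2 (args j)).1)
          = fun j => v2 (args j) := by
        funext j; exact (liftVal M1 M2 h hsurj hsp v2 hv2 (args j)).2
      rw [heq]
      exact hv2 c args
    ⟨mem.choose, mem.choose_spec.2⟩

/-- If there is a surjective strongly-preserving strict homomorphism
h : M₁ → M₂ then ⊢_{M₁} = ⊢_{M₂}. -/
theorem stmt_18 {S : Signature} {V1 V2 : Type} (M1 : NMatrix S V1) (M2 : NMatrix S V2)
    (h : V1 → V2) (hh : StrictHom M1 M2 h) (hsurj : Function.Surjective h)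
    (hsp : StronglyPreserving M1 M2 h) :
    ∀ (Γ : Set (Fm S)) (A : Fm S), Entails M1 Γ A ↔ Entails M2 Γ A := by
  obtain ⟨hD, hsub⟩ := hh
  intro Γ A
  constructor
  · -- M1 entails → M2 entails: lift the M2-valuation
    intro h1 v2 hv2 hΓ
    set v1 : Fm S → V1 := fun B => (liftVal M1 M2 h hsurj hsp v2 hv2 B).1 with hv1def
    have hcomm : ∀ B, h (v1 B) = v2 B := fun B => (liftVal M1 M2 h hsurj hsp v2 hv2 B).2
    have hval1 : IsVal M1 v1 := by
      intro c args
      have mem : v2 (.app c args) ∈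
          h '' M1.interp c (fun j => (liftVal M1 M2 h hsurj hsp v2 hv2 (args j)).1) := by
        rw [hsp]
        have heq : (fun j => h (liftVal M1 M2 h hsurj hsp v2 hv2 (args j)).1)
            = fun j => v2 (args j) := by
          funext j; exact (liftVal M1 M2 h hsurj hsp v2 hv2 (args j)).2
        rw [heq]
        exact hv2 c args
      show (liftVal M1 M2 h hsurj hsp v2 hv2 (.app c args)).1 ∈ _
      simp only [liftVal]
      exact mem.choose_spec.1
    have hdes : v1 A ∈ M1.D := by
      apply h1 v1 hval1
      intro B hB
      rw [hD]
      show h (v1 B) ∈ M2.D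
      rw [hcomm]
      exact hΓ B hB
    rw [hD] at hdes
    rw [← hcomm A]
    exact hdes
  · -- M2 entails → M1 entails: compose with h
    intro h2 v1 hv1 hΓ
    have hval2 : IsVal M2 (fun B => h (v1 B)) := by
      intro c args
      exact hsub c (fun j => v1 (args j)) ⟨v1 (.app c args), hv1 c args, rfl⟩
    have := h2 (fun B => h (v1 B)) hval2 (fun B hB => by
      have := hΓ B hB; rw [hD] at this; exact this)
    rw [hD]
    exact this
end

section
/- Let M_1 and M_2 be Σ-Nmatrices. Then ⊢_{M_1} ⊆ ⊢_{M_2} if and only if BVal(M_2) ⊆ BVal(M_1)^⊓, where BVal(M)^⊓ is the meet-closure of the set BVal(M) of bivaluations induced by M. Consequently, ⊢_{M_1} = ⊢_{M_2} if and only if BVal(M_1)^⊓ = BVal(M_2)^⊓. -/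
/-- The set of bivaluations induced by an Nmatrix M: characteristic functions (into Prop)
of the sets of formulas designated under some valuation of M. -/
def BVal {S : Signature} {V : Type} (M : NMatrix S V) : Set (Fm S → Prop) :=
  { b | ∃ v : Fm S → V, IsVal M v ∧ ∀ A, b A ↔ v A ∈ M.D }

/-- The meet-closure of a set of bivaluations: all pointwise meets of its subsets. -/
def meetClosure {S : Signature} (B : Set (Fm S → Prop)) : Set (Fm S → Prop) :=
  { b | ∃ B' ⊆ B, ∀ A, b A ↔ ∀ b' ∈ B', b' A }

lemma mc_self {S : Signature} (B : Set (Fm S → Prop)) : B ⊆ meetClosure B := by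
  intro b hb
  exact ⟨{b}, Set.singleton_subset_iff.mpr hb, fun A => by simp⟩

lemma mc_trans {S : Signature} {X Y : Set (Fm S → Prop)}
    (h : X ⊆ meetClosure Y) : meetClosure X ⊆ meetClosure Y := by
  intro b hb
  obtain ⟨B', hB', hbeq⟩ := hb
  choose C hC hCeq using fun (b' : Fm S → Prop) (hb' : b' ∈ B') => h (hB' hb')
  refine ⟨{b'' | ∃ b', ∃ hb' : b' ∈ B', b'' ∈ C b' hb'}, ?_, ?_⟩
  · rintro b'' ⟨b', hb', hmem⟩
    exact hC b' hb' hmem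
  · intro A
    rw [hbeq A]
    constructor
    · rintro hall b'' ⟨b', hb', hmem⟩
      exact ((hCeq b' hb' A).mp (hall b' hb')) b'' hmem
    · intro hall b' hb'
      exact (hCeq b' hb' A).mpr (fun b'' hmem => hall b'' ⟨b', hb', hmem⟩)

lemma dir1 {S : Signature} {V1 V2 : Type} (M1 : NMatrix S V1) (M2 : NMatrix S V2)
    (h : ∀ (Γ : Set (Fm S)) (A : Fm S), Entails M1 Γ A → Entails M2 Γ A) :
    BVal M2 ⊆ meetClosure (BVal M1) := by
  rintro b ⟨v2, hv2, hb⟩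
  refine ⟨{b' ∈ BVal M1 | ∀ A, b A → b' A}, fun b' hb' => hb'.1, ?_⟩
  intro A
  constructor
  · intro hA b' hb'
    exact hb'.2 A hA
  · intro hall
    by_contra hnA
    have hne1 : ¬ Entails M1 {B | b B} A := by
      intro he
      have := h _ A he v2 hv2 (fun B hB => (hb B).mp hB)
      exact hnA ((hb A).mpr this)
    rw [Entails] at hne1
    push_neg at hne1
    obtain ⟨v1, hv1, hdes, hnd⟩ := hne1
    exact hnd (hall (fun B => v1 B ∈ M1.D)
      ⟨⟨v1, hv1, fun _ => Iff.rfl⟩, fun B hB => hdes B hB⟩)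

lemma dir2 {S : Signature} {V1 V2 : Type} (M1 : NMatrix S V1) (M2 : NMatrix S V2)
    (h : BVal M2 ⊆ meetClosure (BVal M1)) :
    ∀ (Γ : Set (Fm S)) (A : Fm S), Entails M1 Γ A → Entails M2 Γ A := by
  intro Γ A hE v2 hv2 hdes
  obtain ⟨B', hB', heq⟩ := h (⟨v2, hv2, fun _ => Iff.rfl⟩ :
    (fun B => v2 B ∈ M2.D) ∈ BVal M2)
  refine (heq A).mpr ?_
  intro b' hb'
  obtain ⟨v1, hv1, hb1⟩ := hB' hb'
  refine (hb1 A).mpr (hE v1 hv1 ?_)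
  intro B hB
  exact (hb1 B).mp ((heq B).mp (hdes B hB) b' hb')

/-- ⊢_{M₁} ⊆ ⊢_{M₂} iff BVal(M₂) ⊆ BVal(M₁)^⊓; consequently,
⊢_{M₁} = ⊢_{M₂} iff BVal(M₁)^⊓ = BVal(M₂)^⊓. -/
theorem stmt_19 {S : Signature} {V1 V2 : Type} (M1 : NMatrix S V1) (M2 : NMatrix S V2) :
    ((∀ (Γ : Set (Fm S)) (A : Fm S), Entails M1 Γ A → Entails M2 Γ A) ↔
      BVal M2 ⊆ meetClosure (BVal M1)) ∧
    ((∀ (Γ : Set (Fm S)) (A : Fm S), Entails M1 Γ A ↔ Entails M2 Γ A) ↔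
      meetClosure (BVal M1) = meetClosure (BVal M2)) := by
  constructor
  · exact ⟨dir1 M1 M2, dir2 M1 M2⟩
  · constructor
    · intro h
      apply Set.Subset.antisymm
      · exact mc_trans (dir1 M2 M1 (fun Γ A => (h Γ A).mpr))
      · exact mc_trans (dir1 M1 M2 (fun Γ A => (h Γ A).mp))
    · intro h Γ A
      constructor
      · exact fun hE => dir2 M1 M2 (fun b hb => h ▸ mc_self (BVal M2) hb) Γ A hE
      · exact fun hE => dir2 M2 M1 (fun b hb => h.symm ▸ mc_self (BVal M1) hb) Γ A hE
end
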